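/- For every finite connected graph G, the hyperbolicity of G is attained on a quadruple of vertices lying in a common biconnected component: if x,y,z,w realize the maximum hyperbolicity δ(G) > 0, then there exists a quadruple within a single biconnected component of G achieving hyperbolicity at least δ(G). In particular, if every biconnected component of G is a single edge (i.e., G is a tree), then δ(G) = 0. -/

import Mathlib

/-- The hyperbolicity (S3 - S2)/2 of a quadruple of vertices of a graph, where
S1 ≤ S2 ≤ S3 are the distance sums d(a,b)+d(c,d), d(a,c)+d(b,d), d(a,d)+d(b,c)
sorted nondecreasingly (S3 - S2 = 2·max + min - (S1+S2+S3)). -/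
noncomputable def graphDelta4 {V : Type*} (G : SimpleGraph V) (a b c d : V) : ℝ :=
  let A : ℝ := (G.dist a b : ℝ) + (G.dist c d : ℝ)
  let B : ℝ := (G.dist a c : ℝ) + (G.dist b d : ℝ)
  let C : ℝ := (G.dist a d : ℝ) + (G.dist b c : ℝ)
  (2 * max A (max B C) + min A (min B C) - (A + B + C)) / 2

/-- A set `B` of vertices induces a biconnected subgraph: the induced subgraph is
connected and removing any single vertex keeps it (pre)connected. -/
def IsBiconnectedSet {V : Type*} (G : SimpleGraph V) (B : Set V) : Prop :=
  (G.induce B).Connected ∧ ∀ c ∈ B, (G.induce (B \ {c})).Preconnected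

/-- A biconnected component: a maximal set of vertices inducing a biconnected
subgraph. -/
def IsBiconnectedComponent {V : Type*} (G : SimpleGraph V) (B : Set V) : Prop :=
  IsBiconnectedSet G B ∧ ∀ B', B ⊆ B' → IsBiconnectedSet G B' → B' = B


open SimpleGraph

universe u
variable {V : Type u}


lemma some_ne_some {κ : Type*} {x y : κ} (h : ¬ x = y) : (some x : Option κ) ≠ some y := by
  simpa using h

lemma comb {κ : Type*} [Nonempty κ] (a b c d : Option κ)
    (h : ¬ ∃ K : κ, (a = none ∨ a = some K) ∧ (b = none ∨ b = some K) ∧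
          (c = none ∨ c = some K) ∧ (d = none ∨ d = some K)) :
    (a ≠ none ∧ a ≠ b ∧ a ≠ c ∧ a ≠ d) ∨
    (b ≠ none ∧ b ≠ a ∧ b ≠ c ∧ b ≠ d) ∨
    (c ≠ none ∧ c ≠ a ∧ c ≠ b ∧ c ≠ d) ∨
    (d ≠ none ∧ d ≠ a ∧ d ≠ b ∧ d ≠ c) ∨
    (a ≠ none ∧ c ≠ none ∧ a = b ∧ c = d ∧ a ≠ c) ∨
    (a ≠ none ∧ b ≠ none ∧ a = c ∧ b = d ∧ a ≠ b) ∨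
    (a ≠ none ∧ b ≠ none ∧ a = d ∧ b = c ∧ a ≠ b) := by
  classical
  rcases a with _ | ka <;> rcases b with _ | kb <;> rcases c with _ | kc <;> rcases d with _ | kd
  · exact absurd ⟨Classical.arbitrary κ, by simp⟩ h
  · exact absurd ⟨kd, by simp⟩ h
  · exact absurd ⟨kc, by simp⟩ h
  · by_cases h34 : kc = kd
    · subst h34; exact absurd ⟨kc, by simp⟩ h
    · exact Or.inr (Or.inr (Or.inl ⟨by simp, by simp, by simp, some_ne_some h34⟩))
  · exact absurd ⟨kb, by simp⟩ h
  · by_cases h24 : kb = kd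
    · subst h24; exact absurd ⟨kb, by simp⟩ h
    · exact Or.inr (Or.inl ⟨by simp, by simp, by simp, some_ne_some h24⟩)
  · by_cases h23 : kb = kc
    · subst h23; exact absurd ⟨kb, by simp⟩ h
    · exact Or.inr (Or.inl ⟨by simp, by simp, some_ne_some h23, by simp⟩)
  · by_cases h23 : kb = kc
    · subst h23
      by_cases h24 : kb = kd
      · subst h24; exact absurd ⟨kb, by simp⟩ h
      · exact Or.inr (Or.inr (Or.inr (Or.inl ⟨by simp, by simp,
          some_ne_some (Ne.symm h24), some_ne_some (Ne.symm h24)⟩)))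
    · by_cases h24 : kb = kd
      · subst h24
        exact Or.inr (Or.inr (Or.inl ⟨by simp, by simp,
          some_ne_some (Ne.symm h23), some_ne_some (Ne.symm h23)⟩))
      · exact Or.inr (Or.inl ⟨by simp, by simp, some_ne_some h23, some_ne_some h24⟩)
  · exact absurd ⟨ka, by simp⟩ h
  · by_cases h14 : ka = kd
    · subst h14; exact absurd ⟨ka, by simp⟩ h
    · exact Or.inl ⟨by simp, by simp, by simp, some_ne_some h14⟩
  · by_cases h13 : ka = kc
    · subst h13; exact absurd ⟨ka, by simp⟩ h
    · exact Or.inl ⟨by simp, by simp, some_ne_some h13, by simp⟩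
  · by_cases h13 : ka = kc
    · subst h13
      by_cases h14 : ka = kd
      · subst h14; exact absurd ⟨ka, by simp⟩ h
      · exact Or.inr (Or.inr (Or.inr (Or.inl ⟨by simp, some_ne_some (Ne.symm h14),
          by simp, some_ne_some (Ne.symm h14)⟩)))
    · by_cases h14 : ka = kd
      · subst h14
        exact Or.inr (Or.inr (Or.inl ⟨by simp, some_ne_some (Ne.symm h13),
          by simp, some_ne_some (Ne.symm h13)⟩))
      · exact Or.inl ⟨by simp, by simp, some_ne_some h13, some_ne_some h14⟩
  · by_cases h12 : ka = kb
    · subst h12; exact absurd ⟨ka, by simp⟩ h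
    · exact Or.inl ⟨by simp, some_ne_some h12, by simp, by simp⟩
  · by_cases h12 : ka = kb
    · subst h12
      by_cases h14 : ka = kd
      · subst h14; exact absurd ⟨ka, by simp⟩ h
      · exact Or.inr (Or.inr (Or.inr (Or.inl ⟨by simp, some_ne_some (Ne.symm h14),
          some_ne_some (Ne.symm h14), by simp⟩)))
    · by_cases h14 : ka = kd
      · subst h14
        exact Or.inr (Or.inl ⟨by simp, some_ne_some (Ne.symm h12),
          by simp, some_ne_some (Ne.symm h12)⟩)
      · exact Or.inl ⟨by simp, some_ne_some h12, by simp, some_ne_some h14⟩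
  · by_cases h12 : ka = kb
    · subst h12
      by_cases h13 : ka = kc
      · subst h13; exact absurd ⟨ka, by simp⟩ h
      · exact Or.inr (Or.inr (Or.inl ⟨by simp, some_ne_some (Ne.symm h13),
          some_ne_some (Ne.symm h13), by simp⟩))
    · by_cases h13 : ka = kc
      · subst h13
        exact Or.inr (Or.inl ⟨by simp, some_ne_some (Ne.symm h12),
          some_ne_some (Ne.symm h12), by simp⟩)
      · exact Or.inl ⟨by simp, some_ne_some h12, some_ne_some h13, by simp⟩
  · by_cases h12 : ka = kb
    · subst h12
      by_cases h13 : ka = kc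
      · subst h13
        by_cases h14 : ka = kd
        · subst h14; exact absurd ⟨ka, by simp⟩ h
        · exact Or.inr (Or.inr (Or.inr (Or.inl ⟨by simp, some_ne_some (Ne.symm h14),
            some_ne_some (Ne.symm h14), some_ne_some (Ne.symm h14)⟩)))
      · by_cases h14 : ka = kd
        · subst h14
          exact Or.inr (Or.inr (Or.inl ⟨by simp, some_ne_some (Ne.symm h13),
            some_ne_some (Ne.symm h13), some_ne_some (Ne.symm h13)⟩))
        · by_cases h34 : kc = kd
          · subst h34
            exact Or.inr (Or.inr (Or.inr (Or.inr (Or.inl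
              ⟨by simp, by simp, rfl, rfl, some_ne_some h13⟩))))
          · exact Or.inr (Or.inr (Or.inl ⟨by simp, some_ne_some (Ne.symm h13),
              some_ne_some (Ne.symm h13), some_ne_some h34⟩))
    · by_cases h13 : ka = kc
      · subst h13
        by_cases h24 : kb = kd
        · subst h24
          exact Or.inr (Or.inr (Or.inr (Or.inr (Or.inr (Or.inl
            ⟨by simp, by simp, rfl, rfl, some_ne_some h12⟩)))))
        · by_cases h14 : ka = kd
          · subst h14
            exact Or.inr (Or.inl ⟨by simp, some_ne_some (Ne.symm h12),
              some_ne_some (Ne.symm h12), some_ne_some (Ne.symm h12)⟩)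
          · exact Or.inr (Or.inr (Or.inr (Or.inl ⟨by simp, some_ne_some (Ne.symm h14),
              some_ne_some (Ne.symm h24), some_ne_some (Ne.symm h14)⟩)))
      · by_cases h14 : ka = kd
        · subst h14
          by_cases h23 : kb = kc
          · subst h23
            exact Or.inr (Or.inr (Or.inr (Or.inr (Or.inr (Or.inr
              ⟨by simp, by simp, rfl, rfl, some_ne_some h12⟩)))))
          · exact Or.inr (Or.inl ⟨by simp, some_ne_some (Ne.symm h12),
              some_ne_some h23, some_ne_some (Ne.symm h12)⟩)
        · exact Or.inl ⟨by simp, some_ne_some h12, some_ne_some h13, some_ne_some h14⟩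


def inclHom (G : SimpleGraph V) (s : Set V) : G.induce s →g G := ⟨Subtype.val, fun h => h⟩

lemma exists_walk_induce (G : SimpleGraph V) (s : Set V) {u v : V}
    (p : G.Walk u v) (hp : ∀ t ∈ p.support, t ∈ s) (hu : u ∈ s) (hv : v ∈ s) :
    ∃ q : (G.induce s).Walk ⟨u, hu⟩ ⟨v, hv⟩, q.length = p.length := by
  induction p with
  | nil => exact ⟨Walk.nil, rfl⟩
  | @cons a b c h q ih =>
      have hb : b ∈ s := hp b (by simp [Walk.support_cons])
      obtain ⟨q', hq'⟩ := ih (fun t ht => hp t (by simp [Walk.support_cons, ht])) hb hv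
      exact ⟨Walk.cons (by exact h : (G.induce s).Adj ⟨a, hu⟩ ⟨b, hb⟩) q', by show q'.length + 1 = q.length + 1; rw [hq']⟩

/-- The set of vertices that are `c` or in the component `K` of `G - c`. -/
def SK (G : SimpleGraph V) (c : V) (K : (G.induce (Set.univ \ {c})).ConnectedComponent) : Set V :=
  {v | v = c ∨ ∃ h : v ≠ c,
    (G.induce (Set.univ \ {c})).connectedComponentMk ⟨v, by simp [h]⟩ = K}

lemma c_mem_SK (G : SimpleGraph V) (c : V) (K) : c ∈ SK G c K := Or.inl rfl

lemma reach_avoid (G : SimpleGraph V) (c : V) {u v : V}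
    (p : G.Walk u v) (hp : c ∉ p.support) (hu : u ≠ c) (hv : v ≠ c) :
    (G.induce (Set.univ \ {c})).Reachable ⟨u, by simp [hu]⟩ ⟨v, by simp [hv]⟩ := by
  obtain ⟨q, -⟩ := exists_walk_induce G (Set.univ \ {c}) p
    (fun t ht => by simp; rintro rfl; exact hp ht) (by simp [hu]) (by simp [hv])
  exact ⟨q⟩

lemma comp_eq_of_adj (G : SimpleGraph V) (c : V) {u v : V} (hu : u ≠ c) (hv : v ≠ c)
    (h : G.Adj u v) :
    (G.induce (Set.univ \ {c})).connectedComponentMk ⟨u, by simp [hu]⟩ =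
    (G.induce (Set.univ \ {c})).connectedComponentMk ⟨v, by simp [hv]⟩ :=
  ConnectedComponent.sound (Adj.reachable (by exact h))

lemma split_dist (G : SimpleGraph V) (hG : G.Connected) (c : V) {u v : V}
    (hu : u ≠ c) (hv : v ≠ c)
    (h : (G.induce (Set.univ \ {c})).connectedComponentMk ⟨u, by simp [hu]⟩ ≠
         (G.induce (Set.univ \ {c})).connectedComponentMk ⟨v, by simp [hv]⟩) :
    G.dist u v = G.dist u c + G.dist c v := by
  classical
  obtain ⟨p, hp, hlen⟩ := hG.exists_path_of_dist u v
  have hc : c ∈ p.support := by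
    by_contra hc
    exact h (ConnectedComponent.sound (reach_avoid G c p hc hu hv))
  refine le_antisymm (hG.dist_triangle) ?_
  have h1 : G.dist u c ≤ (p.takeUntil c hc).length := dist_le _
  have h2 : G.dist c v ≤ (p.dropUntil c hc).length := dist_le _
  have h3 : (p.takeUntil c hc).length + (p.dropUntil c hc).length = p.length := by
    conv_rhs => rw [← p.take_spec hc]
    rw [Walk.length_append]
  omega

lemma reach_to_c (G : SimpleGraph V) (hG : G.Connected) (c : V) (K) :
    ∀ n {v : V} (hv : v ∈ SK G c K), G.dist v c ≤ n →
      (G.induce (SK G c K)).Reachable ⟨v, hv⟩ ⟨c, c_mem_SK G c K⟩ := by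
  intro n
  induction n with
  | zero =>
      intro v hv h
      have : v = c := (hG.dist_eq_zero_iff).mp (Nat.le_zero.mp h)
      subst this
      rfl
  | succ n ih =>
      intro v hv h
      by_cases hvc : v = c
      · subst hvc; rfl
      · obtain ⟨p, hp, hlen⟩ := hG.exists_path_of_dist v c
        cases p with
        | nil => exact absurd rfl hvc
        | @cons _ b _ hadj q =>
            have hbK : b ∈ SK G c K := by
              by_cases hbc : b = c
              · exact Or.inl hbc
              · right
                refine ⟨hbc, ?_⟩
                obtain (rfl | ⟨hv', hKv⟩) := hv
                · exact absurd rfl hvc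
                · rw [← comp_eq_of_adj G c hvc hbc hadj]
                  exact hKv
            have hqlen : q.length + 1 = G.dist v c := by
              simpa [Walk.length_cons] using hlen
            have hb : G.dist b c ≤ n := by
              have := dist_le q
              omega
            have hstep : (G.induce (SK G c K)).Adj ⟨v, hv⟩ ⟨b, hbK⟩ := hadj
            exact hstep.reachable.trans (ih hbK hb)

lemma SK_connected (G : SimpleGraph V) (hG : G.Connected) (c : V) (K) :
    (G.induce (SK G c K)).Connected := by
  rw [connected_iff]
  refine ⟨fun a b => ?_, ⟨⟨c, c_mem_SK G c K⟩⟩⟩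
  have ha := reach_to_c G hG c K (G.dist a.1 c) a.2 le_rfl
  have hb := reach_to_c G hG c K (G.dist b.1 c) b.2 le_rfl
  exact ha.trans hb.symm

lemma path_support_SK (G : SimpleGraph V) (c : V) (K) {u v : V} (p : G.Walk u v)
    (hp : p.IsPath) (hu : u ∈ SK G c K) (hv : v ∈ SK G c K) :
    ∀ t ∈ p.support, t ∈ SK G c K := by
  classical
  intro t ht
  by_cases htc : t = c
  · exact Or.inl htc
  right
  refine ⟨htc, ?_⟩
  by_cases hcdrop : c ∈ (p.dropUntil t ht).support
  · have hnodup := hp.support_nodup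
    have hsplit : p.support = (p.takeUntil t ht).support ++ (p.dropUntil t ht).support.tail := by
      rw [← Walk.support_append, p.take_spec]
    have hctail : c ∈ (p.dropUntil t ht).support.tail := by
      have h2 := (p.dropUntil t ht).support_eq_cons
      rw [h2, List.mem_cons] at hcdrop
      rcases hcdrop with h | h
      · exact absurd h.symm htc
      · exact h
    have hcnottake : c ∉ (p.takeUntil t ht).support := by
      rw [hsplit] at hnodup
      exact fun hcl => (List.disjoint_of_nodup_append hnodup) hcl hctail
    have huc : u ≠ c := fun h => hcnottake (h ▸ Walk.start_mem_support _)
    obtain (rfl | ⟨hu', hKu⟩) := hu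
    · exact absurd rfl huc
    · rw [← ConnectedComponent.sound (reach_avoid G c (p.takeUntil t ht) hcnottake hu' htc)]
      exact hKu
  · have hvc : v ≠ c := fun h => hcdrop (h ▸ Walk.end_mem_support _)
    obtain (rfl | ⟨hv', hKv⟩) := hv
    · exact absurd rfl hvc
    · rw [ConnectedComponent.sound (reach_avoid G c (p.dropUntil t ht) hcdrop htc hv')]
      exact hKv

lemma SK_dist (G : SimpleGraph V) (hG : G.Connected) (c : V) (K) {u v : V}
    (hu : u ∈ SK G c K) (hv : v ∈ SK G c K) :
    (G.induce (SK G c K)).dist ⟨u, hu⟩ ⟨v, hv⟩ = G.dist u v := by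
  apply le_antisymm
  · obtain ⟨p, hp, hlen⟩ := hG.exists_path_of_dist u v
    obtain ⟨q, hq⟩ := exists_walk_induce G _ p (path_support_SK G c K p hp hu hv) hu hv
    calc (G.induce (SK G c K)).dist ⟨u, hu⟩ ⟨v, hv⟩ ≤ q.length := dist_le q
    _ = G.dist u v := by rw [hq, hlen]
  · obtain ⟨q, hq, hlen⟩ := (SK_connected G hG c K).exists_path_of_dist ⟨u, hu⟩ ⟨v, hv⟩
    have h2 := dist_le (q.map (inclHom G (SK G c K)))
    rwa [Walk.length_map, hlen] at h2

lemma SK_not_mem (G : SimpleGraph V) (c : V)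
    (hne : ¬(G.induce (Set.univ \ {c})).Preconnected) (K) :
    ∃ p : V, p ∉ SK G c K := by
  rw [Preconnected] at hne
  push_neg at hne
  obtain ⟨a, b, hab⟩ := hne
  have hab' : (G.induce (Set.univ \ {c})).connectedComponentMk a ≠
      (G.induce (Set.univ \ {c})).connectedComponentMk b :=
    fun h => hab (ConnectedComponent.exact h)
  have hac : a.1 ≠ c := fun h => a.2.2 (by simp [h])
  have hbc : b.1 ≠ c := fun h => b.2.2 (by simp [h])
  by_cases hK : (G.induce (Set.univ \ {c})).connectedComponentMk a = K
  · refine ⟨b.1, ?_⟩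
    rintro (h | ⟨h', hKb⟩)
    · exact hbc h
    · apply hab'
      rw [hK, ← hKb]
  · refine ⟨a.1, ?_⟩
    rintro (h | ⟨h', hKa⟩)
    · exact hac h
    · apply hK
      rw [← hKa]

noncomputable def dExpr (A B C : ℝ) : ℝ :=
  (2 * max A (max B C) + min A (min B C) - (A + B + C)) / 2

lemma graphDelta4_eq (G : SimpleGraph V) (a b c d : V) :
    graphDelta4 G a b c d =
      dExpr ((G.dist a b : ℝ) + (G.dist c d : ℝ))
            ((G.dist a c : ℝ) + (G.dist b d : ℝ))
            ((G.dist a d : ℝ) + (G.dist b c : ℝ)) := rfl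

lemma dExpr_comm1 (A B C : ℝ) : dExpr A B C = dExpr B A C := by
  unfold dExpr
  rw [max_left_comm, min_left_comm]
  ring_nf

lemma dExpr_comm2 (A B C : ℝ) : dExpr A B C = dExpr A C B := by
  unfold dExpr
  rw [max_comm B C, min_comm B C]
  ring_nf

lemma dExpr_nonneg (A B C : ℝ) : 0 ≤ dExpr A B C := by
  unfold dExpr
  rcases le_total A B with h1 | h1 <;> rcases le_total B C with h2 | h2 <;>
    rcases le_total A C with h3 | h3 <;>
    simp [max_def, min_def, h1, h2, h3] <;> linarith

lemma dExpr_add_const (k A B C : ℝ) : dExpr (k + A) (k + B) (k + C) = dExpr A B C := by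
  unfold dExpr
  rw [max_add_add_left, max_add_add_left, min_add_add_left, min_add_add_left]
  ring

lemma dExpr_self (t : ℝ) : dExpr t t t = 0 := by unfold dExpr; simp; ring

lemma dExpr_two_pairs {A B C : ℝ} (h : B = C) (h2 : A ≤ B) : dExpr A B C = 0 := by
  subst h
  unfold dExpr
  rw [max_self, max_eq_right h2, min_self, min_eq_left h2]
  ring

lemma dExpr_033 {t : ℝ} (h : 0 ≤ t) : dExpr 0 t t = 0 := dExpr_two_pairs rfl h
lemma dExpr_303 {t : ℝ} (h : 0 ≤ t) : dExpr t 0 t = 0 := by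
  rw [dExpr_comm1]; exact dExpr_033 h
lemma dExpr_330 {t : ℝ} (h : 0 ≤ t) : dExpr t t 0 = 0 := by
  rw [dExpr_comm2]; exact dExpr_303 h

/-- Klein four-group symmetries: identical distance sums. -/
lemma dExpr_rot (A B C : ℝ) : dExpr A B C = dExpr B C A :=
  (dExpr_comm1 A B C).trans (dExpr_comm2 B A C)

lemma delta_perm2 (G : SimpleGraph V) (x y z w : V) :
    graphDelta4 G x y z w = graphDelta4 G y x w z := by
  rw [graphDelta4_eq, graphDelta4_eq, SimpleGraph.dist_comm (G := G) (u := y) (v := x), SimpleGraph.dist_comm (G := G) (u := w) (v := z),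
    SimpleGraph.dist_comm (G := G) (u := y) (v := w), SimpleGraph.dist_comm (G := G) (u := x) (v := z), SimpleGraph.dist_comm (G := G) (u := y) (v := z), SimpleGraph.dist_comm (G := G) (u := x) (v := w)]
  ring_nf

lemma delta_perm3 (G : SimpleGraph V) (x y z w : V) :
    graphDelta4 G x y z w = graphDelta4 G z w x y := by
  rw [graphDelta4_eq, graphDelta4_eq, SimpleGraph.dist_comm (G := G) (u := z) (v := x), SimpleGraph.dist_comm (G := G) (u := w) (v := y),
    SimpleGraph.dist_comm (G := G) (u := z) (v := y), SimpleGraph.dist_comm (G := G) (u := w) (v := x)]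
  ring_nf

lemma delta_perm4 (G : SimpleGraph V) (x y z w : V) :
    graphDelta4 G x y z w = graphDelta4 G w z y x := by
  rw [delta_perm2, delta_perm3]

/-- swap positions 2,3 -/
lemma delta_swap23 (G : SimpleGraph V) (x y z w : V) :
    graphDelta4 G x y z w = graphDelta4 G x z y w := by
  rw [graphDelta4_eq, graphDelta4_eq, ← dExpr_comm1, SimpleGraph.dist_comm (G := G) (u := z) (v := y)]

/-- cyclic: (x,y,z,w) ↦ (x,w,y,z) -/
lemma delta_cyc (G : SimpleGraph V) (x y z w : V) :
    graphDelta4 G x y z w = graphDelta4 G x w y z := by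
  rw [graphDelta4_eq, graphDelta4_eq, SimpleGraph.dist_comm (G := G) (u := w) (v := z), SimpleGraph.dist_comm (G := G) (u := w) (v := y)]
  exact (dExpr_rot _ _ _).symm

lemma delta_self (G : SimpleGraph V) (v : V) : graphDelta4 G v v v v = 0 := by
  rw [graphDelta4_eq]
  simp [G.dist_self]
  exact dExpr_self 0

/-- replacing the first vertex by a vertex `c` lying on geodesics to the other three. -/
lemma delta_replace (G : SimpleGraph V) {x y z w c : V}
    (hy : G.dist x y = G.dist x c + G.dist c y)
    (hz : G.dist x z = G.dist x c + G.dist c z)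
    (hw : G.dist x w = G.dist x c + G.dist c w) :
    graphDelta4 G x y z w = graphDelta4 G c y z w := by
  rw [graphDelta4_eq, graphDelta4_eq]
  have e1 : ((G.dist x y : ℝ) + G.dist z w)
      = (G.dist x c : ℝ) + ((G.dist c y : ℝ) + G.dist z w) := by push_cast [hy]; ring
  have e2 : ((G.dist x z : ℝ) + G.dist y w)
      = (G.dist x c : ℝ) + ((G.dist c z : ℝ) + G.dist y w) := by push_cast [hz]; ring
  have e3 : ((G.dist x w : ℝ) + G.dist y z)
      = (G.dist x c : ℝ) + ((G.dist c w : ℝ) + G.dist y z) := by push_cast [hw]; ring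
  rw [e1, e2, e3, dExpr_add_const]

noncomputable def sig (G : SimpleGraph V) (x y z w : V) : ℕ :=
  G.dist x y + G.dist x z + G.dist x w + G.dist y z + G.dist y w + G.dist z w

lemma sig_perm2 (G : SimpleGraph V) (x y z w : V) : sig G x y z w = sig G y x w z := by
  unfold sig
  rw [SimpleGraph.dist_comm (G := G) (u := y) (v := x), SimpleGraph.dist_comm (G := G) (u := w) (v := z),
    SimpleGraph.dist_comm (G := G) (u := y) (v := w), SimpleGraph.dist_comm (G := G) (u := x) (v := z),
    SimpleGraph.dist_comm (G := G) (u := y) (v := z), SimpleGraph.dist_comm (G := G) (u := x) (v := w)]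
  ring

lemma sig_perm3 (G : SimpleGraph V) (x y z w : V) : sig G x y z w = sig G z w x y := by
  unfold sig
  rw [SimpleGraph.dist_comm (G := G) (u := z) (v := x), SimpleGraph.dist_comm (G := G) (u := w) (v := y),
    SimpleGraph.dist_comm (G := G) (u := z) (v := y), SimpleGraph.dist_comm (G := G) (u := w) (v := x)]
  ring

lemma sig_perm4 (G : SimpleGraph V) (x y z w : V) : sig G x y z w = sig G w z y x := by
  rw [sig_perm2, sig_perm3]

lemma sig_replace (G : SimpleGraph V) {x y z w c : V}
    (hy : G.dist x y = G.dist x c + G.dist c y)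
    (hz : G.dist x z = G.dist x c + G.dist c z)
    (hw : G.dist x w = G.dist x c + G.dist c w) :
    sig G c y z w + 3 * G.dist x c = sig G x y z w := by
  unfold sig
  omega

lemma delta_pair_zero (G : SimpleGraph V) (hG : G.Connected) {x y z w c : V}
    (hxz : G.dist x z = G.dist x c + G.dist c z)
    (hxw : G.dist x w = G.dist x c + G.dist c w)
    (hyz : G.dist y z = G.dist y c + G.dist c z)
    (hyw : G.dist y w = G.dist y c + G.dist c w) :
    graphDelta4 G x y z w = 0 := by
  rw [graphDelta4_eq]
  apply dExpr_two_pairs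
  · have := hxz; have := hyw
    push_cast [hxz, hyw, hxw, hyz]
    ring
  · have t1 : G.dist x y ≤ G.dist x c + G.dist c y := hG.dist_triangle
    have t2 : G.dist z w ≤ G.dist z c + G.dist c w := hG.dist_triangle
    have hc : G.dist z c = G.dist c z := SimpleGraph.dist_comm
    have hc2 : G.dist c y = G.dist y c := SimpleGraph.dist_comm
    push_cast [hxz, hyw]
    have : (G.dist x y : ℝ) ≤ G.dist x c + G.dist y c := by
      rw [← hc2]; exact_mod_cast t1
    have : (G.dist z w : ℝ) ≤ G.dist c z + G.dist c w := by
      rw [← hc]; exact_mod_cast t2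
    linarith

lemma delta_pair_of_two (G : SimpleGraph V) (u v : V) (p q r s : V)
    (hp : u = p ∨ v = p) (hq : u = q ∨ v = q) (hr : u = r ∨ v = r) (hs : u = s ∨ v = s) :
    graphDelta4 G p q r s = 0 := by
  rcases hp with rfl | rfl <;> rcases hq with rfl | rfl <;>
    rcases hr with rfl | rfl <;> rcases hs with rfl | rfl <;>
    rw [graphDelta4_eq] <;>
    simp [SimpleGraph.dist_self, SimpleGraph.dist_comm (G := G) (u := v) (v := u)] <;>
    first
      | exact dExpr_self _
      | exact dExpr_033 (by positivity)
      | exact dExpr_303 (by positivity)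
      | exact dExpr_330 (by positivity)

noncomputable def induceInduceIso (G : SimpleGraph V) (S : Set V) (B : Set ↥S) :
    (G.induce S).induce B ≃g G.induce (Subtype.val '' B) where
  toEquiv := Equiv.Set.image Subtype.val B Subtype.val_injective
  map_rel_iff' := Iff.rfl

lemma isBiconnectedSet_image {G : SimpleGraph V} {S : Set V} {B : Set ↥S}
    (h : IsBiconnectedSet (G.induce S) B) : IsBiconnectedSet G (Subtype.val '' B) := by
  constructor
  · exact (induceInduceIso G S B).connected_iff.mp h.1
  · intro c hc
    obtain ⟨c', hc', rfl⟩ := hc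
    have hpre := h.2 c' hc'
    have e : (Subtype.val '' B) \ {(c' : V)} = Subtype.val '' (B \ {c'}) := by
      rw [Set.image_diff Subtype.val_injective, Set.image_singleton]
    rw [e]
    exact (induceInduceIso G S (B \ {c'})).preconnected_iff.mp hpre

lemma isBiconnectedSet_singleton (G : SimpleGraph V) (v : V) :
    IsBiconnectedSet G {v} := by
  constructor
  · rw [SimpleGraph.connected_iff]
    refine ⟨?_, ⟨⟨v, rfl⟩⟩⟩
    intro a b
    have : a = b := Subtype.ext (a.2.trans b.2.symm)
    exact this ▸ Reachable.refl a
  · intro c hc a b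
    have hc' : c = v := hc
    obtain ⟨a1, ha⟩ := a
    rw [hc'] at ha
    simp at ha

lemma exists_bcc_aux (G : SimpleGraph V) [Fintype V] :
    ∀ (k : ℕ) (B0 : Set V), Fintype.card V - B0.ncard ≤ k → IsBiconnectedSet G B0 →
    ∃ B, IsBiconnectedComponent G B ∧ B0 ⊆ B := by
  intro k
  induction k with
  | zero =>
      intro B0 hk h0
      refine ⟨B0, ⟨h0, fun B' hsub hbi => ?_⟩, subset_rfl⟩
      by_contra hne
      have hss : B0 ⊂ B' := hsub.ssubset_of_ne (fun hh => hne hh.symm)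
      have hcard : B0.ncard < B'.ncard := Set.ncard_lt_ncard hss (Set.toFinite B')
      have hle : B'.ncard ≤ Fintype.card V := by
        have := Set.ncard_le_ncard (Set.subset_univ B') (Set.toFinite _)
        rwa [Set.ncard_univ, Nat.card_eq_fintype_card] at this
      omega
  | succ n ih =>
      intro B0 hk h0
      by_cases hmax : ∀ B', B0 ⊆ B' → IsBiconnectedSet G B' → B' = B0
      · exact ⟨B0, ⟨h0, hmax⟩, subset_rfl⟩
      · push_neg at hmax
        obtain ⟨B', hsub, hbi, hne⟩ := hmax
        have hss : B0 ⊂ B' := hsub.ssubset_of_ne (fun hh => hne hh.symm)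
        have hcard : B0.ncard < B'.ncard := Set.ncard_lt_ncard hss (Set.toFinite B')
        have hle : B'.ncard ≤ Fintype.card V := by
          have := Set.ncard_le_ncard (Set.subset_univ B') (Set.toFinite _)
          rwa [Set.ncard_univ, Nat.card_eq_fintype_card] at this
        obtain ⟨B, hB, hsub'⟩ := ih B' (by omega) hbi
        exact ⟨B, hB, hsub.trans hsub'⟩

lemma exists_bcc (G : SimpleGraph V) [Fintype V] {B0 : Set V} (h : IsBiconnectedSet G B0) :
    ∃ B, IsBiconnectedComponent G B ∧ B0 ⊆ B :=
  exists_bcc_aux G (Fintype.card V - B0.ncard) B0 le_rfl h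

lemma no_triangle {G : SimpleGraph V} (hT : G.IsTree) {p q r : V}
    (hpq : G.Adj p q) (hqr : G.Adj q r) (hpr : G.Adj p r) : False := by
  obtain ⟨P, -, huniq⟩ := hT.existsUnique_path p r
  have h1 : (Walk.cons hpr Walk.nil).IsPath := by
    simp [hpr.ne]
  have h2 : (Walk.cons hpq (Walk.cons hqr Walk.nil)).IsPath := by
    simp [Walk.cons_isPath_iff, hpq.ne, hqr.ne, hpr.ne]
  have e := (huniq _ h2).trans (huniq _ h1).symm
  have := congrArg Walk.length e
  simp [Walk.length_cons] at this

lemma tree_sep {G : SimpleGraph V} (hT : G.IsTree) {m a b : V}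
    (ham : G.Adj a m) (hmb : G.Adj m b) (hab : a ≠ b)
    (W : G.Walk a b) (hW : m ∉ W.support) : False := by
  classical
  have hP2 : (Walk.cons ham (Walk.cons hmb Walk.nil)).IsPath := by
    simp [Walk.cons_isPath_iff, ham.ne, hmb.ne, hab]
  have hW' : W.bypass.IsPath := Walk.bypass_isPath W
  have hm' : m ∉ W.bypass.support := fun hmem => hW (Walk.support_bypass_subset _ hmem)
  obtain ⟨P, -, huniq⟩ := hT.existsUnique_path a b
  have e := (huniq _ hP2).trans (huniq _ hW').symm
  apply hm'
  rw [← e]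
  simp

lemma exists_mid {G : SimpleGraph V} {a b : V} (hne : a ≠ b) (hnadj : ¬G.Adj a b)
    (hreach : G.Reachable a b) :
    ∃ m m2 : V, G.Adj a m ∧ G.Adj m m2 ∧ a ≠ m2 ∧ m ≠ m2 := by
  classical
  obtain ⟨P⟩ := hreach
  have hP : P.bypass.IsPath := Walk.bypass_isPath P
  rcases hEq : P.bypass with _ | @⟨_, m, _, h1, q⟩
  · exact absurd rfl hne
  · rcases q with _ | @⟨_, m2, _, h2, q2⟩
    · exact absurd h1 hnadj
    · rw [hEq] at hP
      have f1 := (Walk.cons_isPath_iff _ _).mp hP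
      have f2 := (Walk.cons_isPath_iff _ _).mp f1.1
      refine ⟨m, m2, h1, h2, ?_, h2.ne⟩
      intro hh
      apply f1.2
      rw [hh]
      simp [Walk.support_cons]

lemma block_pair {G : SimpleGraph V} (hT : G.IsTree) {B : Set V}
    (hB : IsBiconnectedSet G B) {α β : V} (hα : α ∈ B) (hβ : β ∈ B)
    (hne : α ≠ β) (hnadj : ¬ G.Adj α β) : False := by
  classical
  have hne' : (⟨α, hα⟩ : ↥B) ≠ ⟨β, hβ⟩ := fun hh => hne (congrArg Subtype.val hh)
  have hnadj' : ¬ (G.induce B).Adj ⟨α, hα⟩ ⟨β, hβ⟩ := fun hh => hnadj hh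
  obtain ⟨m, m2, h1, h2, hne2, hne3⟩ :=
    exists_mid hne' hnadj' (hB.1.preconnected ⟨α, hα⟩ ⟨β, hβ⟩)
  have hadj1 : G.Adj α m.1 := h1
  have hadj2 : G.Adj m.1 m2.1 := h2
  have hα' : α ∈ B \ {m.1} := ⟨hα, fun hh => hadj1.ne (Set.mem_singleton_iff.mp hh)⟩
  have hm2' : m2.1 ∈ B \ {m.1} := ⟨m2.2, fun hh => hne3 (Subtype.ext (Set.mem_singleton_iff.mp hh).symm)⟩
  obtain ⟨W2⟩ := hB.2 m.1 m.2 ⟨α, hα'⟩ ⟨m2.1, hm2'⟩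
  have hWmap : m.1 ∉ (W2.map (inclHom G (B \ {m.1}))).support := by
    rw [Walk.support_map]
    intro hmem
    obtain ⟨t, ht, hteq⟩ := List.mem_map.mp hmem
    exact t.2.2 hteq
  exact tree_sep hT hadj1 hadj2 (fun hh => hne2 (Subtype.ext hh)) _ hWmap

lemma tree_block_small {G : SimpleGraph V} (hT : G.IsTree) {B : Set V}
    (hB : IsBiconnectedSet G B) : ∃ u v : V, ∀ t ∈ B, t = u ∨ t = v := by
  by_contra hcon
  push_neg at hcon
  obtain ⟨⟨u, hu⟩⟩ := hB.1.nonempty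
  obtain ⟨v, hv, hvu, -⟩ := hcon u u
  obtain ⟨t, ht, htu, htv⟩ := hcon u v
  by_cases huv : G.Adj u v
  · by_cases hut : G.Adj u t
    · by_cases hvt : G.Adj v t
      · exact no_triangle hT huv hvt hut
      · exact block_pair hT hB hv ht (fun hh => htv hh.symm) hvt
    · exact block_pair hT hB hu ht (fun hh => htu hh.symm) hut
  · exact block_pair hT hB hu hv (fun hh => hvu hh.symm) huv

lemma main_lemma : ∀ (n : ℕ), ∀ {V : Type u} [Fintype V] (G : SimpleGraph V),
    Fintype.card V ≤ n → G.Connected → ∀ (m : ℕ) (x y z w : V), sig G x y z w ≤ m →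
    ∃ B : Set V, IsBiconnectedSet G B ∧ ∃ a ∈ B, ∃ b ∈ B, ∃ c ∈ B, ∃ d ∈ B,
      graphDelta4 G x y z w ≤ graphDelta4 G a b c d := by
  intro n
  induction n using Nat.strong_induction_on with
  | _ n ihn =>
  intro V _ G hcard hG m
  induction m using Nat.strong_induction_on with
  | _ m ihm =>
  intro x y z w hm
  classical
  by_cases hbc : IsBiconnectedSet G Set.univ
  · exact ⟨Set.univ, hbc, x, trivial, y, trivial, z, trivial, w, trivial, le_rfl⟩
  have hconn : (G.induce (Set.univ : Set V)).Connected := (induceUnivIso G).connected_iff.mpr hG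
  have hcut : ∃ c, ¬(G.induce (Set.univ \ {c})).Preconnected := by
    by_contra hno
    push_neg at hno
    exact hbc ⟨hconn, fun c _ => hno c⟩
  obtain ⟨c, hnc⟩ := hcut
  have hneK : Nonempty (G.induce (Set.univ \ {c})).ConnectedComponent := by
    rw [Preconnected] at hnc
    push_neg at hnc
    obtain ⟨a, b, -⟩ := hnc
    exact ⟨(G.induce (Set.univ \ {c})).connectedComponentMk a⟩
  by_cases hall : ∃ K, x ∈ SK G c K ∧ y ∈ SK G c K ∧ z ∈ SK G c K ∧ w ∈ SK G c K
  · obtain ⟨K, hx, hy, hz, hw⟩ := hall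
    obtain ⟨p, hp⟩ := SK_not_mem G c hnc K
    have hcard' : Fintype.card (SK G c K) < Fintype.card V := Fintype.card_subtype_lt hp
    obtain ⟨B', hB', ⟨a, ha2⟩, ha, ⟨b, hb2⟩, hb, ⟨c', hc2⟩, hc', ⟨d', hd2⟩, hd', hle⟩ :=
      ihn (Fintype.card (SK G c K)) (lt_of_lt_of_le hcard' hcard) (G.induce (SK G c K))
        le_rfl (SK_connected G hG c K)
        (sig (G.induce (SK G c K)) ⟨x,hx⟩ ⟨y,hy⟩ ⟨z,hz⟩ ⟨w,hw⟩) ⟨x,hx⟩ ⟨y,hy⟩ ⟨z,hz⟩ ⟨w,hw⟩ le_rfl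
    refine ⟨Subtype.val '' B', isBiconnectedSet_image hB', a, ⟨⟨a, ha2⟩, ha, rfl⟩,
      b, ⟨⟨b, hb2⟩, hb, rfl⟩, c', ⟨⟨c', hc2⟩, hc', rfl⟩, d', ⟨⟨d', hd2⟩, hd', rfl⟩, ?_⟩
    have e1 : graphDelta4 (G.induce (SK G c K)) ⟨x,hx⟩ ⟨y,hy⟩ ⟨z,hz⟩ ⟨w,hw⟩
        = graphDelta4 G x y z w := by
      rw [graphDelta4_eq, graphDelta4_eq, SK_dist G hG c K hx hy, SK_dist G hG c K hz hw,
        SK_dist G hG c K hx hz, SK_dist G hG c K hy hw, SK_dist G hG c K hx hw,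
        SK_dist G hG c K hy hz]
    have e2 : graphDelta4 (G.induce (SK G c K)) ⟨a, ha2⟩ ⟨b, hb2⟩ ⟨c', hc2⟩ ⟨d', hd2⟩
        = graphDelta4 G a b c' d' := by
      rw [graphDelta4_eq, graphDelta4_eq, SK_dist G hG c K ha2 hb2, SK_dist G hG c K hc2 hd2,
        SK_dist G hG c K ha2 hc2, SK_dist G hG c K hb2 hd2, SK_dist G hG c K ha2 hd2,
        SK_dist G hG c K hb2 hc2]
    rw [← e1, ← e2]
    exact hle
  · set H := G.induce (Set.univ \ {c}) with hHdef
    set tg : V → Option H.ConnectedComponent := fun v =>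
      if h : v = c then none else some (H.connectedComponentMk ⟨v, by simp [h]⟩) with htgdef
    have tg_none : ∀ v, tg v = none ↔ v = c := by
      intro v
      by_cases h : v = c <;> simp [tg, h]
    have tg_mem : ∀ v K, v ∈ SK G c K ↔ (tg v = none ∨ tg v = some K) := by
      intro v K
      by_cases h : v = c
      · simp [SK, h, tg]
      · simp [SK, h, tg]; exact Iff.rfl
    have hcomb := comb (tg x) (tg y) (tg z) (tg w) (by
      rintro ⟨K, h1, h2, h3, h4⟩
      exact hall ⟨K, (tg_mem x K).2 h1, (tg_mem y K).2 h2,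
        (tg_mem z K).2 h3, (tg_mem w K).2 h4⟩)
    have hsplit : ∀ u v : V, tg u ≠ none → tg u ≠ tg v →
        G.dist u v = G.dist u c + G.dist c v := by
      intro u v hu huv
      have huc : u ≠ c := fun h => hu ((tg_none u).2 h)
      by_cases hvc : v = c
      · subst hvc
        simp [SimpleGraph.dist_self]
      · refine split_dist G hG c huc hvc ?_
        intro hcomp
        apply huv
        simp only [tg, dif_neg huc, dif_neg hvc]
        rw [Option.some_inj]
        exact hcomp
    have alone_front : ∀ x' y' z' w' : V, sig G x' y' z' w' = sig G x y z w →
        graphDelta4 G x' y' z' w' = graphDelta4 G x y z w →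
        tg x' ≠ none → tg x' ≠ tg y' → tg x' ≠ tg z' → tg x' ≠ tg w' →
        (∃ B : Set V, IsBiconnectedSet G B ∧ ∃ a ∈ B, ∃ b ∈ B, ∃ c ∈ B, ∃ d ∈ B,
          graphDelta4 G x y z w ≤ graphDelta4 G a b c d) := by
      intro x' y' z' w' hsig hdelta hx0 h1 h2 h3
      have e1 := hsplit x' y' hx0 h1
      have e2 := hsplit x' z' hx0 h2
      have e3 := hsplit x' w' hx0 h3
      have hx'c : x' ≠ c := fun h => hx0 ((tg_none _).2 h)
      have hdpos : 0 < G.dist x' c :=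
        Nat.pos_of_ne_zero (fun h => hx'c (hG.dist_eq_zero_iff.1 h))
      have hrepl := sig_replace G e1 e2 e3
      have hsiglt : sig G c y' z' w' < m := by omega
      obtain ⟨B, hB, a, ha, b, hb, c0, hc0, d0, hd0, hle⟩ :=
        ihm (sig G c y' z' w') hsiglt c y' z' w' le_rfl
      refine ⟨B, hB, a, ha, b, hb, c0, hc0, d0, hd0, ?_⟩
      rw [← hdelta, delta_replace G e1 e2 e3]
      exact hle
    have pair_front : ∀ x' y' z' w' : V,
        graphDelta4 G x' y' z' w' = graphDelta4 G x y z w →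
        tg x' ≠ none → tg z' ≠ none → tg x' = tg y' → tg z' = tg w' → tg x' ≠ tg z' →
        (∃ B : Set V, IsBiconnectedSet G B ∧ ∃ a ∈ B, ∃ b ∈ B, ∃ c ∈ B, ∃ d ∈ B,
          graphDelta4 G x y z w ≤ graphDelta4 G a b c d) := by
      intro x' y' z' w' hdelta hx0 hz0 hxy hzw hxz
      have hy0 : tg y' ≠ none := hxy ▸ hx0
      have e1 := hsplit x' z' hx0 hxz
      have e2 := hsplit x' w' hx0 (hzw ▸ hxz)
      have e3 := hsplit y' z' hy0 (hxy ▸ hxz)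
      have e4 := hsplit y' w' hy0 (hzw ▸ hxy ▸ hxz)
      have h0 : graphDelta4 G x' y' z' w' = 0 := delta_pair_zero G hG e1 e2 e3 e4
      refine ⟨{x}, isBiconnectedSet_singleton G x, x, Set.mem_singleton x, x,
        Set.mem_singleton x, x, Set.mem_singleton x, x, Set.mem_singleton x, ?_⟩
      rw [← hdelta, h0, delta_self]
    rcases hcomb with ⟨h0, h1, h2, h3⟩ | ⟨h0, h1, h2, h3⟩ | ⟨h0, h1, h2, h3⟩ |
      ⟨h0, h1, h2, h3⟩ | ⟨h0, h0', h1, h2, h3⟩ | ⟨h0, h0', h1, h2, h3⟩ | ⟨h0, h0', h1, h2, h3⟩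
    · exact alone_front x y z w rfl rfl h0 h1 h2 h3
    · exact alone_front y x w z (sig_perm2 G x y z w).symm (delta_perm2 G x y z w).symm
        h0 h1 h3 h2
    · exact alone_front z w x y (sig_perm3 G x y z w).symm (delta_perm3 G x y z w).symm
        h0 h3 h1 h2
    · exact alone_front w z y x (sig_perm4 G x y z w).symm (delta_perm4 G x y z w).symm
        h0 h3 h2 h1
    · exact pair_front x y z w rfl h0 h0' h1 h2 h3
    · exact pair_front x z y w (delta_swap23 G x y z w).symm h0 h0' h1 h2 h3
    · exact pair_front x w y z (delta_cyc G x y z w).symm h0 h0' h1 h2 h3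
/-- The hyperbolicity of a finite connected graph is attained on a quadruple lying in a
common biconnected component: if `x,y,z,w` realize the maximum hyperbolicity
`δ(G) > 0`, then some quadruple within a single biconnected component achieves
hyperbolicity at least `δ(G)`.  In particular, if `G` is a tree then `δ(G) = 0`. -/
theorem hyperbolicity_attained_in_biconnected_component {V : Type*} [Fintype V]
    (G : SimpleGraph V) (hG : G.Connected) :
    (∀ x y z w : V,
      (∀ a b c d : V, graphDelta4 G a b c d ≤ graphDelta4 G x y z w) →
      0 < graphDelta4 G x y z w →
      ∃ B : Set V, IsBiconnectedComponent G B ∧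
        ∃ a ∈ B, ∃ b ∈ B, ∃ c ∈ B, ∃ d ∈ B,
          graphDelta4 G x y z w ≤ graphDelta4 G a b c d) ∧
    (G.IsTree → ∀ a b c d : V, graphDelta4 G a b c d = 0) := by
  constructor
  · intro x y z w _ _
    obtain ⟨B0, hB0, a, ha, b, hb, c, hc, d, hd, hle⟩ :=
      main_lemma (Fintype.card V) G le_rfl hG (sig G x y z w) x y z w le_rfl
    obtain ⟨B, hB, hsub⟩ := exists_bcc G hB0
    exact ⟨B, hB, a, hsub ha, b, hsub hb, c, hsub hc, d, hsub hd, hle⟩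
  · intro hT a b c d
    have h0 : 0 ≤ graphDelta4 G a b c d := by
      rw [graphDelta4_eq]
      exact dExpr_nonneg _ _ _
    obtain ⟨B0, hB0, p, hp, q, hq, r, hr, s, hs, hle⟩ :=
      main_lemma (Fintype.card V) G le_rfl hG (sig G a b c d) a b c d le_rfl
    obtain ⟨u, v, hcover⟩ := tree_block_small hT hB0
    have hz : graphDelta4 G p q r s = 0 :=
      delta_pair_of_two G u v p q r s ((hcover p hp).imp Eq.symm Eq.symm)
        ((hcover q hq).imp Eq.symm Eq.symm) ((hcover r hr).imp Eq.symm Eq.symm)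
        ((hcover s hs).imp Eq.symm Eq.symm)
    rw [hz] at hle
    linarith
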